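/- Let X be a Lefschetz complex over a ring R with unity, let 𝒱 be a multivector field on X, and assume X is invariant with respect to 𝒱. A pair (A,R) of subsets of X is an attractor-repeller pair in X if and only if the following four conditions hold: (i) A is an attractor and R is a repeller; (ii) A ∩ R = ∅; (iii) for every x ∉ A and every full solution ρ through x, α(ρ) ⊆ R; (iv) for every x ∉ R and every full solution ρ through x, ω(ρ) ⊆ A. -/

import Mathlib

open scoped Classical

namespace CMVF

variable {R : Type*} [Ring R] {X : Type*} [Fintype X]

/-- A Lefschetz complex over `R` with cells `X`. -/
structure Lefschetz (R : Type*) [Ring R] (X : Type*) [Fintype X] where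
  dim : X → ℕ
  κ : X → X → R
  dim_facet : ∀ x y, κ x y ≠ 0 → dim x = dim y + 1
  κ_sq : ∀ x z, (∑ y : X, κ x y * κ y z) = 0

namespace Lefschetz

variable (L : Lefschetz R X)

/-- The face order `y ≤κ x` : the partial order generated by the facet relation. -/
def le (y x : X) : Prop := Relation.ReflTransGen (fun a b => L.κ b a ≠ 0) y x

/-- Closure of a set of cells: all faces of cells of `A`. -/
def cls (A : Set X) : Set X := {z | ∃ a ∈ A, L.le z a}

/-- Closure of a single cell. -/
def clPt (x : X) : Set X := L.cls {x}

/-- The minimal open set containing `x`. -/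
def opn (x : X) : Set X := {z | L.le x z}

/-- `A` is closed. -/
def Closed (A : Set X) : Prop := L.cls A = A

/-- The mouth of `A`. -/
def mo (A : Set X) : Set X := L.cls A \ A

/-- `A` is proper: its mouth is closed. -/
def Proper (A : Set X) : Prop := L.Closed (L.mo A)

/-- Relative closure within an ambient subcomplex `W`. -/
def clsIn (W A : Set X) : Set X := L.cls A ∩ W

/-- Relative mouth within an ambient subcomplex `W`. -/
def moIn (W A : Set X) : Set X := L.clsIn W A \ A

/-- The boundary operator of the subcomplex determined by `A`
(`∂ x = ∑ y ∈ A, κ x y • y` for `x ∈ A`). -/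
noncomputable def bd (A : Set X) : (X → R) →ₗ[R] (X → R) where
  toFun f := fun y => if y ∈ A then ∑ x : X, (if x ∈ A then f x * L.κ x y else 0) else 0
  map_add' f g := by
    funext y
    by_cases hy : y ∈ A
    · simp only [hy, if_true, Pi.add_apply]
      rw [← Finset.sum_add_distrib]
      refine Finset.sum_congr rfl fun x _ => ?_
      by_cases hx : x ∈ A <;> simp [hx, add_mul]
    · simp [hy]
  map_smul' r f := by
    funext y
    by_cases hy : y ∈ A
    · simp only [hy, if_true, Pi.smul_apply, smul_eq_mul, RingHom.id_apply]
      rw [Finset.mul_sum]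
      refine Finset.sum_congr rfl fun x _ => ?_
      by_cases hx : x ∈ A <;> simp [hx, mul_assoc]
    · simp [hy]

/-- The `n`-chains of the subcomplex determined by `A`. -/
noncomputable def chainGroup (A : Set X) (n : ℕ) : Submodule R (X → R) :=
  Submodule.span R {f | ∃ x ∈ A, L.dim x = n ∧ f = Pi.single x 1}

/-- The `n`-cycles of the subcomplex determined by `A`. -/
noncomputable def cycles (A : Set X) (n : ℕ) : Submodule R (X → R) :=
  L.chainGroup A n ⊓ LinearMap.ker (L.bd A)

/-- The `n`-boundaries of the subcomplex determined by `A`. -/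
noncomputable def boundaries (A : Set X) (n : ℕ) : Submodule R (X → R) :=
  (L.chainGroup A (n + 1)).map (L.bd A)

/-- The Lefschetz homology `H^κ_n(A)` of the subcomplex determined by `A`. -/
noncomputable def homology (A : Set X) (n : ℕ) : Type _ :=
  (L.cycles A n) ⧸ ((L.boundaries A n).comap (L.cycles A n).subtype)

noncomputable instance homologyAddCommGroup (A : Set X) (n : ℕ) :
    AddCommGroup (L.homology A n) :=
  inferInstanceAs (AddCommGroup
    ((L.cycles A n) ⧸ ((L.boundaries A n).comap (L.cycles A n).subtype)))

noncomputable instance homologyModule (A : Set X) (n : ℕ) :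
    Module R (L.homology A n) :=
  inferInstanceAs (Module R
    ((L.cycles A n) ⧸ ((L.boundaries A n).comap (L.cycles A n).subtype)))

/-- `A` is a zero space: its Lefschetz homology vanishes. -/
def HomologyZero (A : Set X) : Prop := ∀ n, Subsingleton (L.homology A n)

/-- The Poincaré polynomial `p_A(t) = ∑ rank H^κ_n(A) tⁿ`. -/
noncomputable def poincare (A : Set X) : Polynomial ℕ :=
  ∑ n ∈ Finset.image L.dim Finset.univ,
    Polynomial.C (Module.finrank R (L.homology A n)) * Polynomial.X ^ n

/-- `V` is a multivector: proper, with a unique maximal element. -/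
def IsMV (V : Set X) : Prop :=
  L.Proper V ∧ ∃! m, m ∈ V ∧ ∀ x ∈ V, L.le x m

/-- A regular multivector: one with vanishing Lefschetz homology. -/
def Regular (V : Set X) : Prop := L.HomologyZero V

end Lefschetz

/-- A combinatorial multivector field on a Lefschetz complex: a partition into multivectors. -/
structure MVField {R : Type*} [Ring R] {X : Type*} [Fintype X] (L : Lefschetz R X) where
  mvs : Set (Set X)
  isMV : ∀ V ∈ mvs, L.IsMV V
  cover : ∀ x : X, ∃! V, V ∈ mvs ∧ x ∈ V

namespace MVField

variable {L : Lefschetz R X} (F : MVField L)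

/-- `[x]` : the multivector containing `x`. -/
noncomputable def mclass (x : X) : Set X := (F.cover x).exists.choose

lemma mclass_spec (x : X) : F.mclass x ∈ F.mvs ∧ x ∈ F.mclass x :=
  (F.cover x).exists.choose_spec

/-- `x★` : the dominant cell of the multivector containing `x`. -/
noncomputable def star (x : X) : X :=
  ((F.isMV _ (F.mclass_spec x).1).2).exists.choose

/-- `[x]°` : the regular part of the multivector of `x`. -/
noncomputable def regPart (x : X) : Set X :=
  if L.Regular (F.mclass x) then F.mclass x else F.mclass x \ {F.star x}

/-- The multivalued map `Π_𝒱`. -/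
noncomputable def Pi (x : X) : Set X :=
  if x = F.star x then L.clPt x \ F.regPart x else {F.star x}

/-- The multivalued map of the multivector field restricted to the subcomplex `W`. -/
noncomputable def PiIn (W : Set X) (x : X) : Set X := F.Pi x ∩ W

/-- `φ : ℤ → X` is a full solution of the multivector field restricted to `W`. -/
def IsSolIn (W : Set X) (φ : ℤ → X) : Prop := ∀ i, φ (i + 1) ∈ F.PiIn W (φ i)

/-- There is a full solution (of the field restricted to `W`) through `x` with values in `A`. -/
def FullSolThroughIn (W : Set X) (x : X) (A : Set X) : Prop :=
  ∃ φ : ℤ → X, F.IsSolIn W φ ∧ (∃ i, φ i = x) ∧ ∀ i, φ i ∈ A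

/-- `A` is `𝒱`-compatible. -/
def Compat (A : Set X) : Prop := ∀ x ∈ A, F.mclass x ⊆ A

/-- `[A]⁻` : the maximal `𝒱`-compatible subset of `A`. -/
def lowerC (A : Set X) : Set X := {x ∈ A | F.mclass x ⊆ A}

/-- `[A]⁺` : the minimal `𝒱`-compatible superset of `A`. -/
def upperC (A : Set X) : Set X := ⋃ x ∈ A, F.mclass x

/-- `Inv A`, the invariant part of `A`, computed in the subcomplex `W`. -/
def InvPartIn (W A : Set X) : Set X :=
  {x ∈ A | F.FullSolThroughIn W (F.star x) (F.lowerC A)}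

/-- `A` is invariant (within the subcomplex `W`). -/
def InvariantIn (W A : Set X) : Prop := F.InvPartIn W A = A

/-- `φ` is a path (solution) on the integer interval `[a,b]`, within the subcomplex `W`. -/
def IsPathOnIn (W : Set X) (a b : ℤ) (φ : ℤ → X) : Prop :=
  ∀ i, a ≤ i → i < b → φ (i + 1) ∈ F.PiIn W (φ i)

/-- `S` admits an internal tangency within the subcomplex `W`. -/
def HasInternalTangencyIn (W S : Set X) : Prop :=
  ∃ (a b : ℤ) (φ : ℤ → X), a ≤ b ∧ F.IsPathOnIn W a b φ ∧
    (∀ i, a ≤ i → i ≤ b → φ i ∈ L.clsIn W S) ∧ φ a ∈ S ∧ φ b ∈ S ∧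
    ∃ i, a ≤ i ∧ i ≤ b ∧ φ i ∈ L.moIn W S

/-- `S` is an isolated invariant set within the subcomplex `W`. -/
def IsoInvIn (W S : Set X) : Prop :=
  F.InvariantIn W S ∧ ¬ F.HasInternalTangencyIn W S

/-- `N` is a trapping region within the subcomplex `W`. -/
def TrappingIn (W N : Set X) : Prop :=
  N ⊆ W ∧ F.Compat N ∧ ∀ x ∈ N, F.PiIn W x ⊆ N

/-- `N` is a backward trapping region within the subcomplex `W`. -/
def BackTrappingIn (W N : Set X) : Prop :=
  N ⊆ W ∧ F.Compat N ∧ ∀ x ∈ W, ∀ y ∈ F.PiIn W x, y ∈ N → x ∈ N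

/-- `A` is an attractor within the subcomplex `W`. -/
def AttractorIn (W A : Set X) : Prop :=
  ∃ N, F.TrappingIn W N ∧ A = F.InvPartIn W N

/-- `A` is a repeller within the subcomplex `W`. -/
def RepellerIn (W A : Set X) : Prop :=
  ∃ N, F.BackTrappingIn W N ∧ A = F.InvPartIn W N

/-- The α-limit set of a full solution `φ`. -/
def alphaIn (W : Set X) (φ : ℤ → X) : Set X :=
  ⋂ k : ℕ, F.InvPartIn W (F.upperC (φ '' {i : ℤ | i ≤ -(k : ℤ)}))

/-- The ω-limit set of a full solution `φ`. -/
def omegaIn (W : Set X) (φ : ℤ → X) : Set X :=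
  ⋂ k : ℕ, F.InvPartIn W (F.upperC (φ '' {i : ℤ | (k : ℤ) ≤ i}))

/-- `C(A',A)` : the set of cells lying on connections running from `A'` to `A`. -/
def ConnIn (W A' A : Set X) : Set X :=
  {x | ∃ φ : ℤ → X, F.IsSolIn W φ ∧ (∃ i, φ i = F.star x) ∧
        F.alphaIn W φ ⊆ A' ∧ F.omegaIn W φ ⊆ A}

/-- `(A, Rp)` is an attractor-repeller pair in the subcomplex `W`. -/
def ARPairIn (W A Rp : Set X) : Prop :=
  F.AttractorIn W A ∧ F.RepellerIn W Rp ∧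
    A = F.InvPartIn W (W \ Rp) ∧ Rp = F.InvPartIn W (W \ A)

/-- `M` is a Morse decomposition of the subcomplex `W`, with admissible order `le`. -/
def MorseDecompIn (W : Set X) {P : Type*} [Finite P] (le : P → P → Prop)
    (M : P → Set X) : Prop :=
  IsPartialOrder P le ∧
  (∀ r, F.IsoInvIn W (M r)) ∧
  (∀ r r', r ≠ r' → Disjoint (M r) (M r')) ∧
  (∀ φ : ℤ → X, F.IsSolIn W φ →
    ∃ r r', le r r' ∧ F.alphaIn W φ ⊆ M r' ∧ F.omegaIn W φ ⊆ M r) ∧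
  (∀ φ : ℤ → X, F.IsSolIn W φ → ∀ r,
    F.alphaIn W φ ⊆ M r → F.omegaIn W φ ⊆ M r → Set.range φ ⊆ M r)

/-- The Morse set `M(I)` of a family of sets indexed by `I ⊆ P`. -/
def MorseSetIn (W : Set X) {P : Type*} (M : P → Set X) (I : Set P) : Set X :=
  ⋃ r ∈ I, ⋃ r' ∈ I, F.ConnIn W (M r') (M r)

/-- `(P₁, P₂)` is an index pair for the isolated invariant set `S`. -/
def IndexPair (S P₁ P₂ : Set X) : Prop :=
  L.Closed P₁ ∧ L.Closed P₂ ∧ P₂ ⊆ P₁ ∧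
  (∀ x ∈ P₂, ∀ y ∈ F.Pi x, y ∈ P₁ → y ∈ P₂) ∧
  (∀ x ∈ P₁, (∃ y ∈ F.Pi x, y ∉ P₁) → x ∈ P₂) ∧
  S = F.InvPartIn Set.univ (P₁ \ P₂)

/-- `x ⤳_A y` : there is a path of length at least two in `A` from `x★` to `y★`. -/
def PathConn (A : Set X) (x y : X) : Prop :=
  ∃ (a b : ℤ) (φ : ℤ → X), a < b ∧
    (∀ i, a ≤ i → i < b → φ (i + 1) ∈ F.Pi (φ i)) ∧
    (∀ i, a ≤ i → i ≤ b → φ i ∈ A) ∧ φ a = F.star x ∧ φ b = F.star y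

/-- The chain recurrent set. -/
def CR : Set X := {x | F.PathConn Set.univ x x}

/-- `B` is a basic set: an equivalence class of mutual connectedness in `CR`. -/
def IsBasicSet (B : Set X) : Prop :=
  ∃ x ∈ F.CR, B = {y ∈ F.CR | F.PathConn Set.univ x y ∧ F.PathConn Set.univ y x}

/-- The set `E_P` of cells of `P₁` all of whose forward solutions meet `P₂`. -/
def Ep (P₁ P₂ : Set X) : Set X :=
  {x ∈ P₁ | ∀ φ : ℕ → X, φ 0 = x → (∀ i, φ (i + 1) ∈ F.Pi (φ i)) → ∃ i, φ i ∈ P₂}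

/-- The preorder `≤_𝒱` induced by the arrows of the multivector field. -/
def leV : X → X → Prop := Relation.ReflTransGen (fun y x => y ∈ F.Pi x)

/-- The multivector field is acyclic: `≤_𝒱` is a partial order. -/
def Acyclic : Prop := ∀ x y, F.leV x y → F.leV y x → x = y

end MVField

end CMVF

open CMVF

variable {R : Type*} [Ring R] {X : Type*} [Fintype X]

section Helpers

variable {L : Lefschetz R X} (F : MVField L)

namespace CMVF.MVField

lemma mclass_eq_of_mem {x y : X} (h : y ∈ F.mclass x) : F.mclass y = F.mclass x :=
  (F.cover y).unique ⟨(F.mclass_spec y).1, (F.mclass_spec y).2⟩ ⟨(F.mclass_spec x).1, h⟩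

lemma star_spec (x : X) :
    F.star x ∈ F.mclass x ∧ ∀ z ∈ F.mclass x, L.le z (F.star x) :=
  ((F.isMV _ (F.mclass_spec x).1).2).exists.choose_spec

lemma star_mem (x : X) : F.star x ∈ F.mclass x := (F.star_spec x).1

lemma star_eq_of_mclass_eq {x y : X} (h : F.mclass x = F.mclass y) :
    F.star x = F.star y := by
  have hu := (F.isMV _ (F.mclass_spec y).1).2
  have hx := F.star_spec x
  rw [h] at hx
  exact hu.unique hx (F.star_spec y)

lemma star_eq_of_mem {x y : X} (h : y ∈ F.mclass x) : F.star y = F.star x :=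
  F.star_eq_of_mclass_eq (F.mclass_eq_of_mem h)

lemma star_star (x : X) : F.star (F.star x) = F.star x :=
  F.star_eq_of_mem (F.star_mem x)

lemma star_mem' (x : X) : x ∈ F.mclass (F.star x) := by
  rw [F.mclass_eq_of_mem (F.star_mem x)]; exact (F.mclass_spec x).2

lemma pi_of_ne {x : X} (h : x ≠ F.star x) : F.Pi x = {F.star x} := by
  simp [MVField.Pi, h]

@[simp] lemma piIn_univ (x : X) : F.PiIn Set.univ x = F.Pi x := by
  simp [MVField.PiIn]

lemma isSolIn_univ {φ : ℤ → X} (h : F.IsSolIn Set.univ φ) (i : ℤ) :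
    φ (i + 1) ∈ F.Pi (φ i) := by
  have := h i; rwa [F.piIn_univ] at this

end CMVF.MVField

end Helpers

section Helpers2

variable {L : Lefschetz R X} (F : MVField L)

namespace CMVF.MVField

lemma lowerC_eq_of_compat {N : Set X} (h : F.Compat N) : F.lowerC N = N := by
  ext x; exact ⟨fun hx => hx.1, fun hx => ⟨hx, h x hx⟩⟩

lemma lowerC_mono {A B : Set X} (h : A ⊆ B) : F.lowerC A ⊆ F.lowerC B :=
  fun x hx => ⟨h hx.1, hx.2.trans h⟩

lemma invPart_mono {W A B : Set X} (h : A ⊆ B) :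
    F.InvPartIn W A ⊆ F.InvPartIn W B := by
  rintro x ⟨hxA, φ, hφ, hi, hv⟩
  exact ⟨h hxA, φ, hφ, hi, fun i => F.lowerC_mono h (hv i)⟩

lemma invPart_subset (W A : Set X) : F.InvPartIn W A ⊆ A := fun _ hx => hx.1

lemma mem_upperC_of_mem {S : Set X} {x y : X} (hx : x ∈ S) (hy : y ∈ F.mclass x) :
    y ∈ F.upperC S := Set.mem_biUnion hx hy

lemma subset_lowerC_upperC (S : Set X) : S ⊆ F.lowerC (F.upperC S) := by
  intro x hx
  exact ⟨F.mem_upperC_of_mem hx (F.mclass_spec x).2,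
    fun y hy => F.mem_upperC_of_mem hx hy⟩

lemma upperC_subset {S B : Set X} (hB : F.Compat B) (h : S ⊆ B) : F.upperC S ⊆ B := by
  intro x hx
  obtain ⟨s, hs, hxs⟩ := Set.mem_iUnion₂.1 hx
  exact hB s (h hs) hxs

lemma compat_compl {B : Set X} (hB : F.Compat B) : F.Compat (Set.univ \ B) := by
  intro x hx y hy
  refine ⟨trivial, fun hyB => hx.2 ?_⟩
  have : F.mclass y = F.mclass x := F.mclass_eq_of_mem hy
  exact hB y hyB (this ▸ (F.mclass_spec x).2)

lemma compat_invPart {W N : Set X} (hC : F.Compat N) :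
    F.Compat (F.InvPartIn W N) := by
  rintro x ⟨hxN, φ, hφ, hi, hv⟩ z hz
  refine ⟨hC x hxN hz, φ, hφ, ?_, hv⟩
  rwa [F.star_eq_of_mem hz]

lemma sol_mem_invPart {N : Set X} (hC : F.Compat N) {σ : ℤ → X}
    (hσ : F.IsSolIn Set.univ σ) (hv : ∀ i, σ i ∈ N) (j : ℤ) :
    σ j ∈ F.InvPartIn Set.univ N := by
  refine ⟨hv j, ?_⟩
  have hlv : ∀ i, σ i ∈ F.lowerC N := by rw [F.lowerC_eq_of_compat hC]; exact hv
  by_cases h : σ j = F.star (σ j)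
  · exact ⟨σ, hσ, ⟨j, h⟩, hlv⟩
  · refine ⟨σ, hσ, ⟨j + 1, ?_⟩, hlv⟩
    have := F.isSolIn_univ hσ j
    rw [F.pi_of_ne h] at this
    exact this

end CMVF.MVField

end Helpers2

section Helpers3

variable {L : Lefschetz R X} (F : MVField L)

namespace CMVF.MVField

lemma trapping_fwd {N : Set X} (hN : F.TrappingIn Set.univ N) {τ : ℤ → X}
    (hτ : F.IsSolIn Set.univ τ) {m : ℤ} (hm : τ m ∈ N) :
    ∀ i, m ≤ i → τ i ∈ N := by
  refine Int.le_induction hm ?_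
  intro j _ ih
  exact hN.2.2 (τ j) ih (by rw [F.piIn_univ]; exact F.isSolIn_univ hτ j)

lemma backtrapping_bwd {M : Set X} (hM : F.BackTrappingIn Set.univ M) {τ : ℤ → X}
    (hτ : F.IsSolIn Set.univ τ) {m : ℤ} (hm : τ m ∈ M) :
    ∀ i, i ≤ m → τ i ∈ M := by
  refine Int.le_induction_down hm ?_
  intro j _ ih
  refine hM.2.2 (τ (j - 1)) trivial (τ j) ?_ ih
  rw [F.piIn_univ]
  have := F.isSolIn_univ hτ (j - 1)
  simpa using this

/-- Two-piece glued solution. -/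
lemma glue_sol {l r : ℤ → X} (hl : F.IsSolIn Set.univ l) (hr : F.IsSolIn Set.univ r)
    (a b : ℤ) (h : r b ∈ F.Pi (l a)) :
    F.IsSolIn Set.univ (fun i => if i ≤ a then l i else r (i - (a + 1) + b)) := by
  intro i
  rw [F.piIn_univ]
  dsimp only
  by_cases h2 : i ≤ a
  · rw [if_pos h2]
    by_cases h1 : i + 1 ≤ a
    · rw [if_pos h1]
      exact F.isSolIn_univ hl i
    · have hia : i = a := by omega
      rw [if_neg h1, show i + 1 - (a + 1) + b = b by omega, hia]
      exact h
  · rw [if_neg h2, if_neg (show ¬ i + 1 ≤ a by omega),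
      show i + 1 - (a + 1) + b = (i - (a + 1) + b) + 1 by omega]
    exact F.isSolIn_univ hr _

/-- Three-piece spliced solution: `l` up to `a`, then `w`, then `r` from `b`. -/
lemma splice_sol {l r : ℤ → X} (hl : F.IsSolIn Set.univ l) (hr : F.IsSolIn Set.univ r)
    (a b : ℤ) (w : X) (h1 : w ∈ F.Pi (l a)) (h2 : r b ∈ F.Pi w) :
    F.IsSolIn Set.univ
      (fun i => if i ≤ a then l i else if i = a + 1 then w else r (i - (a + 2) + b)) := by
  intro i
  rw [F.piIn_univ]
  dsimp only
  by_cases hA : i ≤ a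
  · rw [if_pos hA]
    by_cases hB : i + 1 ≤ a
    · rw [if_pos hB]
      exact F.isSolIn_univ hl i
    · have hia : i = a := by omega
      rw [if_neg hB, if_pos (show i + 1 = a + 1 by omega), hia]
      exact h1
  · by_cases hC : i = a + 1
    · rw [if_neg hA, if_pos hC, if_neg (show ¬ i + 1 ≤ a by omega),
        if_neg (show i + 1 ≠ a + 1 by omega),
        show i + 1 - (a + 2) + b = b by omega]
      exact h2
    · rw [if_neg hA, if_neg hC, if_neg (show ¬ i + 1 ≤ a by omega),
        if_neg (show i + 1 ≠ a + 1 by omega),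
        show i + 1 - (a + 2) + b = (i - (a + 2) + b) + 1 by omega]
      exact F.isSolIn_univ hr _

end CMVF.MVField

end Helpers3

section Helpers4

variable {L : Lefschetz R X} (F : MVField L)

namespace CMVF.MVField

lemma exists_sol_through_star (hX : F.InvariantIn Set.univ Set.univ) (x : X) :
    ∃ τ : ℤ → X, F.IsSolIn Set.univ τ ∧ ∃ j, τ j = F.star x := by
  have hx : x ∈ F.InvPartIn Set.univ Set.univ := by
    rw [hX]; trivial
  obtain ⟨-, τ, hτ, hj, -⟩ := hx
  exact ⟨τ, hτ, hj⟩

/-- Forward invariance of the invariant part of a trapping region. -/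
lemma invPart_fwd (hX : F.InvariantIn Set.univ Set.univ) {N : Set X}
    (hN : F.TrappingIn Set.univ N) {z w : X} (hz : z ∈ F.InvPartIn Set.univ N)
    (hw : w ∈ F.Pi z) : w ∈ F.InvPartIn Set.univ N := by
  obtain ⟨hzN, σ, hσ, ⟨j0, hj0⟩, hσv⟩ := hz
  have hC := hN.2.1
  have hσN : ∀ i, σ i ∈ N := by
    intro i; have := hσv i; rwa [F.lowerC_eq_of_compat hC] at this
  have hwN : w ∈ N := hN.2.2 z hzN (by rw [F.piIn_univ]; exact hw)
  by_cases hzs : z = F.star z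
  · obtain ⟨τ, hτ, m0, hm0⟩ := F.exists_sol_through_star hX w
    have hswN : F.star w ∈ N := hC w hwN (F.star_mem w)
    have hτfwd : ∀ i, m0 ≤ i → τ i ∈ N :=
      F.trapping_fwd hN hτ (by rw [hm0]; exact hswN)
    by_cases hws : w = F.star w
    · have hg : τ m0 ∈ F.Pi (σ j0) := by
        rw [hm0, ← hws, hj0, ← hzs]; exact hw
      refine ⟨hwN, _, F.glue_sol hσ hτ j0 m0 hg, ⟨j0 + 1, ?_⟩, ?_⟩
      · rw [if_neg (show ¬ j0 + 1 ≤ j0 by omega),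
          show j0 + 1 - (j0 + 1) + m0 = m0 by omega]
        exact hm0
      · intro i
        rw [F.lowerC_eq_of_compat hC]
        try dsimp only
        split_ifs with h
        · exact hσN i
        · exact hτfwd _ (by omega)
    · have h1 : w ∈ F.Pi (σ j0) := by rw [hj0, ← hzs]; exact hw
      have h2 : τ m0 ∈ F.Pi w := by
        rw [F.pi_of_ne hws, hm0]; rfl
      refine ⟨hwN, _, F.splice_sol hσ hτ j0 m0 w h1 h2, ⟨j0 + 2, ?_⟩, ?_⟩
      · rw [if_neg (show ¬ j0 + 2 ≤ j0 by omega),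
          if_neg (show j0 + 2 ≠ j0 + 1 by omega),
          show j0 + 2 - (j0 + 2) + m0 = m0 by omega]
        exact hm0
      · intro i
        rw [F.lowerC_eq_of_compat hC]
        try dsimp only
        split_ifs with h h'
        · exact hσN i
        · exact hwN
        · exact hτfwd _ (by omega)
  · rw [F.pi_of_ne hzs] at hw
    have hw' : w = F.star z := hw
    refine ⟨hwN, σ, hσ, ⟨j0, ?_⟩, hσv⟩
    rw [hw', F.star_star]
    exact hj0

/-- Backward invariance of the invariant part of a backward trapping region. -/
lemma invPart_bwd (hX : F.InvariantIn Set.univ Set.univ) {M : Set X}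
    (hM : F.BackTrappingIn Set.univ M) {z w : X} (hw : w ∈ F.Pi z)
    (hwI : w ∈ F.InvPartIn Set.univ M) : z ∈ F.InvPartIn Set.univ M := by
  obtain ⟨hwM, σ, hσ, ⟨n0, hn0⟩, hσv⟩ := hwI
  have hC := hM.2.1
  have hσM : ∀ i, σ i ∈ M := by
    intro i; have := hσv i; rwa [F.lowerC_eq_of_compat hC] at this
  have hzM : z ∈ M := hM.2.2 z trivial w (by rw [F.piIn_univ]; exact hw) hwM
  by_cases hzs : z = F.star z
  · obtain ⟨τ, hτ, j0, hj0⟩ := F.exists_sol_through_star hX z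
    have hτbwd : ∀ i, i ≤ j0 → τ i ∈ M := by
      refine fun i hi => F.backtrapping_bwd hM hτ ?_ i hi
      rw [hj0, ← hzs]; exact hzM
    by_cases hws : w = F.star w
    · have hg : σ n0 ∈ F.Pi (τ j0) := by
        rw [hn0, ← hws, hj0, ← hzs]; exact hw
      refine ⟨hzM, _, F.glue_sol hτ hσ j0 n0 hg, ⟨j0, ?_⟩, ?_⟩
      · rw [if_pos (le_refl j0)]
        exact hj0
      · intro i
        rw [F.lowerC_eq_of_compat hC]
        try dsimp only
        split_ifs with h
        · exact hτbwd i h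
        · exact hσM _
    · have h1 : w ∈ F.Pi (τ j0) := by rw [hj0, ← hzs]; exact hw
      have h2 : σ n0 ∈ F.Pi w := by
        rw [F.pi_of_ne hws, hn0]; rfl
      refine ⟨hzM, _, F.splice_sol hτ hσ j0 n0 w h1 h2, ⟨j0, ?_⟩, ?_⟩
      · rw [if_pos (le_refl j0)]
        exact hj0
      · intro i
        rw [F.lowerC_eq_of_compat hC]
        try dsimp only
        split_ifs with h h'
        · exact hτbwd i h
        · exact hwM
        · exact hσM _
  · rw [F.pi_of_ne hzs] at hw
    have hw' : w = F.star z := hw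
    refine ⟨hzM, σ, hσ, ⟨n0, ?_⟩, hσv⟩
    rw [hn0, hw', F.star_star]

end CMVF.MVField

end Helpers4

section Helpers5

variable {L : Lefschetz R X} (F : MVField L)

namespace CMVF.MVField

lemma exists_recurrent_back (σ : ℤ → X) : ∃ y : X, ∀ m : ℤ, ∃ i ≤ m, σ i = y := by
  by_contra h
  push_neg at h
  choose m hm using h
  have hne : (Finset.univ : Finset X).Nonempty := ⟨σ 0, Finset.mem_univ _⟩
  set M := Finset.univ.inf' hne m with hM
  exact hm (σ M) M (Finset.inf'_le m (Finset.mem_univ _)) rfl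

lemma exists_recurrent_fwd (σ : ℤ → X) : ∃ y : X, ∀ m : ℤ, ∃ i, m ≤ i ∧ σ i = y := by
  by_contra h
  push_neg at h
  choose m hm using h
  have hne : (Finset.univ : Finset X).Nonempty := ⟨σ 0, Finset.mem_univ _⟩
  set M := Finset.univ.sup' hne m with hM
  exact hm (σ M) M (Finset.le_sup' m (Finset.mem_univ _)) rfl

lemma periodic_sol {σ : ℤ → X} (hσ : F.IsSolIn Set.univ σ) {a b : ℤ}
    (hab : a + 2 ≤ b) (hy : σ a = σ b) :
    F.IsSolIn Set.univ (fun i => σ (a + (i - a) % (b - a))) ∧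
      (∀ i : ℤ, ∃ j, a ≤ j ∧ j ≤ b - 1 ∧ σ (a + (i - a) % (b - a)) = σ j) ∧
      (∀ j, a ≤ j → j ≤ b - 1 → σ (a + (j - a) % (b - a)) = σ j) := by
  have hp : (0 : ℤ) < b - a := by omega
  have hmod : ∀ i : ℤ, 0 ≤ (i - a) % (b - a) ∧ (i - a) % (b - a) < b - a := by
    intro i
    exact ⟨Int.emod_nonneg _ (by omega), Int.emod_lt_of_pos _ hp⟩
  refine ⟨?_, ?_, ?_⟩
  · intro i
    rw [F.piIn_univ]
    dsimp only
    have key : (i + 1 - a) % (b - a) = ((i - a) % (b - a) + 1) % (b - a) := by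
      have h1 : (1 : ℤ) % (b - a) = 1 := Int.emod_eq_of_lt (by omega) (by omega)
      conv_lhs => rw [show i + 1 - a = (i - a) + 1 by ring]
      rw [Int.add_emod, h1]
    set r := (i - a) % (b - a) with hr
    have h0 := hmod i
    by_cases hlt : r + 1 < b - a
    · rw [key, Int.emod_eq_of_lt (by omega) hlt,
        show a + (r + 1) = (a + r) + 1 by ring]
      exact F.isSolIn_univ hσ (a + r)
    · have hre : r + 1 = b - a := by omega
      rw [key, hre, Int.emod_self, add_zero, hy,
        show b = (a + r) + 1 by omega]
      exact F.isSolIn_univ hσ (a + r)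
  · intro i
    have h0 := hmod i
    exact ⟨a + (i - a) % (b - a), by omega, by omega, rfl⟩
  · intro j hj1 hj2
    rw [Int.emod_eq_of_lt (by omega) (by omega)]
    ring_nf

lemma recurrent_mem_alpha {σ : ℤ → X} (hσ : F.IsSolIn Set.univ σ) {y : X}
    (hy : ∀ m : ℤ, ∃ i ≤ m, σ i = y) : y ∈ F.alphaIn Set.univ σ := by
  rw [MVField.alphaIn]
  refine Set.mem_iInter.2 fun k => ?_
  set S : Set X := σ '' {i : ℤ | i ≤ -(k : ℤ)} with hS
  obtain ⟨b, hb, hby⟩ := hy (-(k : ℤ))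
  obtain ⟨a, ha, hay⟩ := hy (b - 2)
  have hab : a + 2 ≤ b := by omega
  have hyab : σ a = σ b := by rw [hay, hby]
  obtain ⟨hsol, hrange, hagree⟩ := F.periodic_sol hσ hab hyab
  have hmemS : ∀ j, a ≤ j → j ≤ b - 1 → σ j ∈ S :=
    fun j hj1 hj2 => ⟨j, by simp only [Set.mem_setOf_eq]; omega, rfl⟩
  have hvals : ∀ i : ℤ, σ (a + (i - a) % (b - a)) ∈ F.lowerC (F.upperC S) := by
    intro i
    obtain ⟨j, hj1, hj2, hje⟩ := hrange i
    rw [hje]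
    exact F.subset_lowerC_upperC S (hmemS j hj1 hj2)
  have hyS : y ∈ S := hay ▸ hmemS a le_rfl (by omega)
  refine ⟨F.mem_upperC_of_mem hyS (F.mclass_spec y).2, ?_⟩
  by_cases hys : y = F.star y
  · refine ⟨_, hsol, ⟨a, ?_⟩, hvals⟩
    rw [hagree a le_rfl (by omega), hay, ← hys]
  · have hstep : σ (a + 1) = F.star y := by
      have := F.isSolIn_univ hσ a
      rw [hay, F.pi_of_ne hys] at this
      exact this
    refine ⟨_, hsol, ⟨a + 1, ?_⟩, hvals⟩
    rw [hagree (a + 1) (by omega) (by omega), hstep]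

lemma recurrent_mem_omega {σ : ℤ → X} (hσ : F.IsSolIn Set.univ σ) {y : X}
    (hy : ∀ m : ℤ, ∃ i, m ≤ i ∧ σ i = y) : y ∈ F.omegaIn Set.univ σ := by
  rw [MVField.omegaIn]
  refine Set.mem_iInter.2 fun k => ?_
  set S : Set X := σ '' {i : ℤ | (k : ℤ) ≤ i} with hS
  obtain ⟨a, ha, hay⟩ := hy (k : ℤ)
  obtain ⟨b, hb, hby⟩ := hy (a + 2)
  have hab : a + 2 ≤ b := hb
  have hyab : σ a = σ b := by rw [hay, hby]
  obtain ⟨hsol, hrange, hagree⟩ := F.periodic_sol hσ hab hyab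
  have hmemS : ∀ j, a ≤ j → j ≤ b - 1 → σ j ∈ S :=
    fun j hj1 hj2 => ⟨j, by simp only [Set.mem_setOf_eq]; omega, rfl⟩
  have hvals : ∀ i : ℤ, σ (a + (i - a) % (b - a)) ∈ F.lowerC (F.upperC S) := by
    intro i
    obtain ⟨j, hj1, hj2, hje⟩ := hrange i
    rw [hje]
    exact F.subset_lowerC_upperC S (hmemS j hj1 hj2)
  have hyS : y ∈ S := hay ▸ hmemS a le_rfl (by omega)
  refine ⟨F.mem_upperC_of_mem hyS (F.mclass_spec y).2, ?_⟩
  by_cases hys : y = F.star y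
  · refine ⟨_, hsol, ⟨a, ?_⟩, hvals⟩
    rw [hagree a le_rfl (by omega), hay, ← hys]
  · have hstep : σ (a + 1) = F.star y := by
      have := F.isSolIn_univ hσ a
      rw [hay, F.pi_of_ne hys] at this
      exact this
    refine ⟨_, hsol, ⟨a + 1, ?_⟩, hvals⟩
    rw [hagree (a + 1) (by omega) (by omega), hstep]

end CMVF.MVField

end Helpers5

section MainAux

variable {L : Lefschetz R X} (F : MVField L)

namespace CMVF.MVField

lemma mem_of_star_mem {B : Set X} (hB : F.Compat B) {x : X}
    (h : F.star x ∈ B) : x ∈ B := hB _ h (F.star_mem' x)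

lemma fwd_prop (hX : F.InvariantIn Set.univ Set.univ) {N : Set X}
    (hN : F.TrappingIn Set.univ N) {φ : ℤ → X} (hφ : F.IsSolIn Set.univ φ)
    {i j : ℤ} (hij : i ≤ j) (h : φ i ∈ F.InvPartIn Set.univ N) :
    φ j ∈ F.InvPartIn Set.univ N := by
  refine Int.le_induction (m := i) (motive := fun j _ => φ j ∈ F.InvPartIn Set.univ N)
    h ?_ j hij
  intro m _ ih
  exact F.invPart_fwd hX hN ih (F.isSolIn_univ hφ m)

lemma bwd_prop (hX : F.InvariantIn Set.univ Set.univ) {M : Set X}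
    (hM : F.BackTrappingIn Set.univ M) {φ : ℤ → X} (hφ : F.IsSolIn Set.univ φ)
    {i j : ℤ} (hij : i ≤ j) (h : φ j ∈ F.InvPartIn Set.univ M) :
    φ i ∈ F.InvPartIn Set.univ M := by
  have key : ∀ n, i ≤ n → (φ n ∈ F.InvPartIn Set.univ M →
      φ i ∈ F.InvPartIn Set.univ M) := by
    refine Int.le_induction (fun h => h) ?_
    intro m _ ih hm
    exact ih (F.invPart_bwd hX hM (F.isSolIn_univ hφ m) hm)
  exact key j hij h

end CMVF.MVField

end MainAux

/-- Theorem: `(A, Rp)` is an attractor-repeller pair in `X` if and only if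
(i) `A` is an attractor and `Rp` a repeller, (ii) `A ∩ Rp = ∅`,
(iii) every full solution through an `x ∉ A` has `α(ρ) ⊆ Rp`,
(iv) every full solution through an `x ∉ Rp` has `ω(ρ) ⊆ A`. -/
theorem attractor_repeller_pair_characterization (L : Lefschetz R X) (F : MVField L)
    (hX : F.InvariantIn Set.univ Set.univ) (A Rp : Set X) :
    F.ARPairIn Set.univ A Rp ↔
      (F.AttractorIn Set.univ A ∧ F.RepellerIn Set.univ Rp) ∧
      A ∩ Rp = ∅ ∧
      (∀ x, x ∉ A → ∀ φ : ℤ → X, F.IsSolIn Set.univ φ → (∃ i, φ i = x) →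
        F.alphaIn Set.univ φ ⊆ Rp) ∧
      (∀ x, x ∉ Rp → ∀ φ : ℤ → X, F.IsSolIn Set.univ φ → (∃ i, φ i = x) →
        F.omegaIn Set.univ φ ⊆ A) := by
  constructor
  · rintro ⟨hAtt, hRep, hAeq, hReq⟩
    obtain ⟨N, hN, hAN⟩ := hAtt
    obtain ⟨M, hM, hRM⟩ := hRep
    have hAcompat : F.Compat A := hAN ▸ F.compat_invPart hN.2.1
    have hRcompat : F.Compat Rp := hRM ▸ F.compat_invPart hM.2.1
    refine ⟨⟨⟨N, hN, hAN⟩, ⟨M, hM, hRM⟩⟩, ?_, ?_, ?_⟩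
    · ext x
      simp only [Set.mem_inter_iff, Set.mem_empty_iff_false, iff_false, not_and]
      intro hxA
      exact (hAeq ▸ hxA : x ∈ F.InvPartIn Set.univ (Set.univ \ Rp)).1.2
    · rintro x hxA φ hφ ⟨i0, hi0⟩ y hy
      have havoid : ∀ i, i ≤ i0 → φ i ∉ A := by
        intro i hi hin
        apply hxA
        rw [← hi0, hAN]
        exact F.fwd_prop hX hN hφ hi (hAN ▸ hin)
      set k0 : ℕ := (-i0).toNat with hk0def
      have hk0 : -(k0 : ℤ) ≤ i0 := by omega
      have hsub : F.upperC (φ '' {i : ℤ | i ≤ -(k0 : ℤ)}) ⊆ Set.univ \ A := by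
        apply F.upperC_subset (F.compat_compl hAcompat)
        rintro _ ⟨i, hi, rfl⟩
        exact ⟨trivial, havoid i (le_trans hi hk0)⟩
      simp only [MVField.alphaIn, Set.mem_iInter] at hy
      rw [hReq]
      exact F.invPart_mono hsub (hy k0)
    · rintro x hxR φ hφ ⟨i0, hi0⟩ y hy
      have havoid : ∀ i, i0 ≤ i → φ i ∉ Rp := by
        intro i hi hin
        apply hxR
        rw [← hi0, hRM]
        exact F.bwd_prop hX hM hφ hi (hRM ▸ hin)
      set k0 : ℕ := i0.toNat with hk0def
      have hk0 : i0 ≤ (k0 : ℤ) := by omega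
      have hsub : F.upperC (φ '' {i : ℤ | (k0 : ℤ) ≤ i}) ⊆ Set.univ \ Rp := by
        apply F.upperC_subset (F.compat_compl hRcompat)
        rintro _ ⟨i, hi, rfl⟩
        exact ⟨trivial, havoid i (le_trans hk0 hi)⟩
      simp only [MVField.omegaIn, Set.mem_iInter] at hy
      rw [hAeq]
      exact F.invPart_mono hsub (hy k0)
  · rintro ⟨⟨hAtt, hRep⟩, hdisj, hiii, hiv⟩
    obtain ⟨N, hN, hAN⟩ := hAtt
    obtain ⟨M, hM, hRM⟩ := hRep
    have hAcompat : F.Compat A := hAN ▸ F.compat_invPart hN.2.1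
    have hRcompat : F.Compat Rp := hRM ▸ F.compat_invPart hM.2.1
    have hnot : ∀ x, x ∈ A → x ∉ Rp := by
      intro x hx hr
      exact Set.eq_empty_iff_forall_notMem.1 hdisj x ⟨hx, hr⟩
    have hnot' : ∀ x, x ∈ Rp → x ∉ A := fun x hx hA => hnot x hA hx
    refine ⟨⟨N, hN, hAN⟩, ⟨M, hM, hRM⟩, ?_, ?_⟩
    · apply Set.Subset.antisymm
      · -- A ⊆ InvPart (univ \ Rp)
        intro x hx
        obtain ⟨hxN, σ, hσ, ⟨j0, hj0⟩, hσv⟩ := (hAN ▸ hx : x ∈ F.InvPartIn Set.univ N)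
        have hσN : ∀ i, σ i ∈ N := by
          intro i; have := hσv i; rwa [F.lowerC_eq_of_compat hN.2.1] at this
        have hσA : ∀ i, σ i ∈ A := by
          intro i
          rw [hAN]
          exact F.sol_mem_invPart hN.2.1 hσ hσN i
        refine ⟨⟨trivial, hnot x hx⟩, σ, hσ, ⟨j0, hj0⟩, ?_⟩
        intro i
        refine ⟨⟨trivial, hnot _ (hσA i)⟩, ?_⟩
        intro z hz
        exact ⟨trivial, hnot z (hAcompat _ (hσA i) hz)⟩
      · -- InvPart (univ \ Rp) ⊆ A
        rintro x ⟨⟨-, hxR⟩, σ, hσ, ⟨j0, hj0⟩, hσv⟩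
        have hσR : ∀ i, σ i ∉ Rp := fun i => ((hσv i).1).2
        by_contra hxA
        have hxsA : F.star x ∉ A := fun h => hxA (F.mem_of_star_mem hAcompat h)
        have hα := hiii (F.star x) hxsA σ hσ ⟨j0, hj0⟩
        obtain ⟨y, hyrec⟩ := MVField.exists_recurrent_back σ
        have hyα : y ∈ F.alphaIn Set.univ σ := F.recurrent_mem_alpha hσ hyrec
        obtain ⟨i, -, rfl⟩ := hyrec 0
        exact hσR i (hα hyα)
    · apply Set.Subset.antisymm
      · -- Rp ⊆ InvPart (univ \ A)
        intro x hx
        obtain ⟨hxM, σ, hσ, ⟨j0, hj0⟩, hσv⟩ := (hRM ▸ hx : x ∈ F.InvPartIn Set.univ M)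
        have hσM : ∀ i, σ i ∈ M := by
          intro i; have := hσv i; rwa [F.lowerC_eq_of_compat hM.2.1] at this
        have hσR : ∀ i, σ i ∈ Rp := by
          intro i
          rw [hRM]
          exact F.sol_mem_invPart hM.2.1 hσ hσM i
        refine ⟨⟨trivial, hnot' x hx⟩, σ, hσ, ⟨j0, hj0⟩, ?_⟩
        intro i
        refine ⟨⟨trivial, hnot' _ (hσR i)⟩, ?_⟩
        intro z hz
        exact ⟨trivial, hnot' z (hRcompat _ (hσR i) hz)⟩
      · -- InvPart (univ \ A) ⊆ Rp
        rintro x ⟨⟨-, hxA⟩, σ, hσ, ⟨j0, hj0⟩, hσv⟩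
        have hσA : ∀ i, σ i ∉ A := fun i => ((hσv i).1).2
        by_contra hxR
        have hxsR : F.star x ∉ Rp := fun h => hxR (F.mem_of_star_mem hRcompat h)
        have hω := hiv (F.star x) hxsR σ hσ ⟨j0, hj0⟩
        obtain ⟨y, hyrec⟩ := MVField.exists_recurrent_fwd σ
        have hyω : y ∈ F.omegaIn Set.univ σ := F.recurrent_mem_omega hσ hyrec
        obtain ⟨i, -, rfl⟩ := hyrec 0
        exact hσA i (hω hyω)
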